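/- For every real s with 0 < s < 1 and all integers n, K with n ≥ K+1 and K ≥ 1, the sum Σ_{i=2}^{n-K} (1-s)^{i(n-K-i+1)} is strictly less than (2/s − 1)(1-s)^{n-K}. -/

import Mathlib

/-- For `0 < s < 1`, `K ≥ 1` and `n ≥ K+1`,
`∑_{i=2}^{n-K} (1-s)^{i(n-K-i+1)} < (2/s − 1)(1-s)^{n-K}`. -/
theorem stmt9 (s : ℝ) (hs0 : 0 < s) (hs1 : s < 1) (n K : ℕ)
    (hK : 1 ≤ K) (hn : K + 1 ≤ n) :
    ∑ i ∈ Finset.Icc 2 (n - K), (1 - s) ^ (i * (n - K - i + 1))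
      < (2 / s - 1) * (1 - s) ^ (n - K) := by
  set m := n - K with hm
  have hm1 : 1 ≤ m := by omega
  set q := 1 - s with hq
  have hq0 : (0:ℝ) < q := by simp [hq]; linarith
  have hq1 : q < 1 := by simp [hq]; linarith
  have key : ∀ i ∈ Finset.Icc 2 m, q ^ (i * (m - i + 1)) ≤ q ^ m * q ^ (m - i) := by
    intro i hi
    simp only [Finset.mem_Icc] at hi
    rw [← pow_add]
    apply pow_le_pow_of_le_one (le_of_lt hq0) (le_of_lt hq1)
    have h1 : 2 * (m - i) ≤ i * (m - i) := Nat.mul_le_mul hi.1 (le_refl (m - i))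
    have h2 : i * (m - i + 1) = i * (m - i) + i := by ring
    have h3 : m = (m - i) + i := by omega
    linarith
  have step1 : ∑ i ∈ Finset.Icc 2 m, q ^ (i * (m - i + 1))
      ≤ q ^ m * ∑ i ∈ Finset.Icc 2 m, q ^ (m - i) := by
    rw [Finset.mul_sum]
    exact Finset.sum_le_sum key
  have step2 : ∑ i ∈ Finset.Icc 2 m, q ^ (m - i) ≤ ∑ k ∈ Finset.range m, q ^ k := by
    have hinj : Set.InjOn (fun i => m - i) (Finset.Icc 2 m) := by
      intro x hx y hy hxy
      simp only [Finset.coe_Icc, Set.mem_Icc] at hx hy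
      simp only at hxy
      omega
    rw [← Finset.sum_image hinj]
    apply Finset.sum_le_sum_of_subset_of_nonneg
    · intro k hk
      simp only [Finset.mem_image, Finset.mem_Icc] at hk
      obtain ⟨i, hi, rfl⟩ := hk
      simp only [Finset.mem_range]
      omega
    · intro k _ _
      positivity
  have step3 : ∑ k ∈ Finset.range m, q ^ k ≤ 1 / s := by
    rw [le_div_iff₀ hs0]
    have h := geom_sum_mul q m
    have hqs : q - 1 = -s := by rw [hq]; ring
    rw [hqs, mul_neg] at h
    have hqm : (0:ℝ) ≤ q ^ m := by positivity
    linarith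
  have hqm : (0:ℝ) < q ^ m := by positivity
  calc ∑ i ∈ Finset.Icc 2 m, q ^ (i * (m - i + 1))
      ≤ q ^ m * ∑ i ∈ Finset.Icc 2 m, q ^ (m - i) := step1
    _ ≤ q ^ m * (1 / s) := by
        apply mul_le_mul_of_nonneg_left (le_trans step2 step3) (le_of_lt hqm)
    _ < (2 / s - 1) * q ^ m := by
        have h : 1 / s < 2 / s - 1 := by
          have he : 2 / s - 1 - 1 / s = (1 - s) / s := by field_simp; ring
          nlinarith [div_pos (by linarith : (0:ℝ) < 1 - s) hs0]
        nlinarith [hqm]
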